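/- Let α > 0 and β > 0. Suppose s₀ ∈ S is an absorbing state with zero reward, i.e., P(s₀|s₀,a) = 1 and r(s₀,a) = 0 for every action a, and suppose there exist s' ≠ s₀ and an action a' with P(s₀|s',a') > 0. Then for every V : S → ℝ, the one-variable function t ↦ log Z_{V + t·𝟙_{s₀}} (where 𝟙_{s₀}(s) = 1 if s = s₀ and 0 otherwise) is strictly increasing on ℝ; in particular, the dual function V ↦ log Z_V has no critical point and attains no minimum at any finite V. -/

import Mathlib

open Finset

/-- The advantage `A_V(s,a) = r(s,a) + Σ_{s'} V(s') P(s'|s,a) − V(s)`. -/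
noncomputable def Adv {S A : Type} [Fintype S]
    (P : S → A → S → ℝ) (r : S → A → ℝ) (V : S → ℝ) (s : S) (a : A) : ℝ :=
  r s a + (∑ s', V s' * P s a s') - V s

/-- The partition function `Z_V = Σ_s (Σ_a exp(A_V(s,a)/α))^{α/β}`. -/
noncomputable def Zfun {S A : Type} [Fintype S] [Fintype A]
    (P : S → A → S → ℝ) (r : S → A → ℝ) (α β : ℝ) (V : S → ℝ) : ℝ :=
  ∑ s, (∑ a, Real.exp (Adv P r V s a / α)) ^ (α / β)

lemma key_deriv {S A : Type} [Fintype S] [Fintype A] [DecidableEq S] [Nonempty A]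
    (P : S → A → S → ℝ) (hP0 : ∀ s a s', 0 ≤ P s a s')
    (r : S → A → ℝ) (α β : ℝ) (hα : 0 < α) (hβ : 0 < β)
    (s₀ : S) (habs : ∀ a : A, P s₀ a s₀ = 1)
    (s₁ : S) (a₁ : A) (hs₁ : s₁ ≠ s₀) (hrp : 0 < P s₁ a₁ s₀)
    (V : S → ℝ) (t : ℝ) :
    ∃ D : ℝ, 0 < D ∧ HasDerivAt (fun u : ℝ =>
        Real.log (Zfun P r α β (fun s => V s + u * (if s = s₀ then (1:ℝ) else 0)))) D t := by
  classical
  set c : S → A → ℝ := fun s a => P s a s₀ - (if s = s₀ then 1 else 0) with hc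
  have hc0 : ∀ s a, 0 ≤ c s a := by
    intro s a
    by_cases h : s = s₀
    · subst h; simp [hc, habs a]
    · simp [hc, h, hP0 s a s₀]
  have hc1 : 0 < c s₁ a₁ := by simp [hc, hs₁, hrp]
  have hAdv : ∀ (u : ℝ) (s : S) (a : A),
      Adv P r (fun s => V s + u * (if s = s₀ then (1:ℝ) else 0)) s a
        = Adv P r V s a + u * c s a := by
    intro u s a
    have hsum : (∑ s', (if s' = s₀ then (1:ℝ) else 0) * P s a s') = P s a s₀ := by
      rw [Finset.sum_congr rfl (fun s' _ => ite_mul (s' = s₀) 1 0 (P s a s'))]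
      simp
    simp only [Adv, hc]
    rw [show (∑ s', (V s' + u * (if s' = s₀ then (1:ℝ) else 0)) * P s a s')
        = (∑ s', V s' * P s a s') + u * ∑ s', (if s' = s₀ then (1:ℝ) else 0) * P s a s' by
      rw [Finset.mul_sum, ← Finset.sum_add_distrib]; congr 1; ext s'; ring]
    rw [hsum]; ring
  have hZeq : (fun u : ℝ => Zfun P r α β (fun s => V s + u * (if s = s₀ then (1:ℝ) else 0)))
      = fun u => ∑ s, (∑ a, Real.exp ((Adv P r V s a + u * c s a) / α)) ^ (α / β) := by
    funext u
    simp only [Zfun, hAdv]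
  -- inner sum positivity
  have hEpos : ∀ (s : S) (u : ℝ), 0 < ∑ a, Real.exp ((Adv P r V s a + u * c s a) / α) :=
    fun s u => Finset.sum_pos (fun a _ => Real.exp_pos _) Finset.univ_nonempty
  -- derivative of inner sums
  have hE : ∀ s : S, HasDerivAt (fun u : ℝ => ∑ a, Real.exp ((Adv P r V s a + u * c s a) / α))
      (∑ a, Real.exp ((Adv P r V s a + t * c s a) / α) * (c s a / α)) t := by
    intro s
    apply HasDerivAt.fun_sum
    intro a _
    have h1 : HasDerivAt (fun u : ℝ => (Adv P r V s a + u * c s a) / α) (c s a / α) t := by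
      simpa using (((hasDerivAt_id t).mul_const (c s a)).const_add (Adv P r V s a)).div_const α
    exact h1.exp
  have hF : ∀ s : S, HasDerivAt
      (fun u : ℝ => (∑ a, Real.exp ((Adv P r V s a + u * c s a) / α)) ^ (α / β))
      ((∑ a, Real.exp ((Adv P r V s a + t * c s a) / α) * (c s a / α)) * (α / β)
        * (∑ a, Real.exp ((Adv P r V s a + t * c s a) / α)) ^ (α / β - 1)) t :=
    fun s => (hE s).rpow_const (Or.inl (hEpos s t).ne')
  have hZ : HasDerivAt
      (fun u : ℝ => ∑ s, (∑ a, Real.exp ((Adv P r V s a + u * c s a) / α)) ^ (α / β))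
      (∑ s, (∑ a, Real.exp ((Adv P r V s a + t * c s a) / α) * (c s a / α)) * (α / β)
        * (∑ a, Real.exp ((Adv P r V s a + t * c s a) / α)) ^ (α / β - 1)) t :=
    HasDerivAt.fun_sum (fun s _ => hF s)
  have hZpos : 0 < ∑ s, (∑ a, Real.exp ((Adv P r V s a + t * c s a) / α)) ^ (α / β) := by
    have : Nonempty S := ⟨s₀⟩
    exact Finset.sum_pos (fun s _ => Real.rpow_pos_of_pos (hEpos s t) _) Finset.univ_nonempty
  have hDpos : 0 < ∑ s, (∑ a, Real.exp ((Adv P r V s a + t * c s a) / α) * (c s a / α)) * (α / β)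
      * (∑ a, Real.exp ((Adv P r V s a + t * c s a) / α)) ^ (α / β - 1) := by
    apply Finset.sum_pos'
    · intro s _
      apply mul_nonneg (mul_nonneg ?_ (by positivity))
        (Real.rpow_nonneg (hEpos s t).le _)
      exact Finset.sum_nonneg fun a _ => mul_nonneg (Real.exp_pos _).le
        (div_nonneg (hc0 s a) hα.le)
    · refine ⟨s₁, Finset.mem_univ _, ?_⟩
      apply mul_pos (mul_pos ?_ (by positivity)) (Real.rpow_pos_of_pos (hEpos s₁ t) _)
      exact Finset.sum_pos' (fun a _ => mul_nonneg (Real.exp_pos _).le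
          (div_nonneg (hc0 s₁ a) hα.le))
        ⟨a₁, Finset.mem_univ _, mul_pos (Real.exp_pos _) (div_pos hc1 hα)⟩
  refine ⟨_, div_pos hDpos hZpos, ?_⟩
  simp only [Zfun, hAdv]
  exact hZ.log hZpos.ne'

/-- if `s₀` is an absorbing state with zero reward that is
reachable from some other state, then for every `V` the map
`t ↦ log Z_{V + t·𝟙_{s₀}}` is strictly increasing; in particular the dual
function has no critical point and attains no minimum at any finite `V`. -/
theorem absorbing_state_dual_strictMono {S A : Type} [Fintype S] [Fintype A]
    [DecidableEq S] [Nonempty S] [Nonempty A]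
    (P : S → A → S → ℝ) (hP0 : ∀ s a s', 0 ≤ P s a s')
    (hP1 : ∀ s a, (∑ s', P s a s') = 1)
    (r : S → A → ℝ) (α β : ℝ) (hα : 0 < α) (hβ : 0 < β)
    (s₀ : S) (habs : ∀ a : A, P s₀ a s₀ = 1 ∧ r s₀ a = 0)
    (hreach : ∃ (s' : S) (a' : A), s' ≠ s₀ ∧ 0 < P s' a' s₀) :
    (∀ V : S → ℝ, StrictMono (fun t : ℝ =>
        Real.log (Zfun P r α β
          (fun s => V s + t * (if s = s₀ then (1 : ℝ) else 0))))) ∧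
      (∀ V : S → ℝ, ¬ (∀ s : S,
        deriv (fun t : ℝ =>
          Real.log (Zfun P r α β (Function.update V s t))) (V s) = 0)) ∧
      (∀ V : S → ℝ,
        ¬ IsMinOn (fun W : S → ℝ => Real.log (Zfun P r α β W)) Set.univ V) := by
  obtain ⟨s₁, a₁, hs₁, hrp⟩ := hreach
  have key := fun (V : S → ℝ) (t : ℝ) =>
    key_deriv P hP0 r α β hα hβ s₀ (fun a => (habs a).1) s₁ a₁ hs₁ hrp V t
  have hSM : ∀ V : S → ℝ, StrictMono (fun t : ℝ =>
      Real.log (Zfun P r α β (fun s => V s + t * (if s = s₀ then (1:ℝ) else 0)))) := by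
    intro V
    apply strictMono_of_deriv_pos
    intro t
    obtain ⟨D, hD, hder⟩ := key V t
    rw [hder.deriv]; exact hD
  refine ⟨hSM, ?_, ?_⟩
  · intro V h
    obtain ⟨D, hD, hder⟩ := key V 0
    have hsub : HasDerivAt (fun t : ℝ => t - V s₀) 1 (V s₀) := (hasDerivAt_id _).sub_const _
    have hder0 : HasDerivAt (fun u : ℝ =>
        Real.log (Zfun P r α β (fun s => V s + u * (if s = s₀ then (1:ℝ) else 0)))) D
        ((fun t : ℝ => t - V s₀) (V s₀)) := by simpa using hder
    have hcomp : HasDerivAt ((fun u : ℝ =>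
        Real.log (Zfun P r α β (fun s => V s + u * (if s = s₀ then (1:ℝ) else 0)))) ∘
          (fun t : ℝ => t - V s₀)) (D * 1) (V s₀) := HasDerivAt.comp (V s₀) hder0 hsub
    have heq : ((fun u : ℝ =>
        Real.log (Zfun P r α β (fun s => V s + u * (if s = s₀ then (1:ℝ) else 0)))) ∘
          (fun t : ℝ => t - V s₀))
        = fun t : ℝ => Real.log (Zfun P r α β (Function.update V s₀ t)) := by
      funext t
      simp only [Function.comp]
      congr 1
      congr 1
      funext s
      by_cases hs : s = s₀ <;> simp [Function.update, hs]
    rw [heq] at hcomp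
    have h0' := h s₀
    rw [hcomp.deriv, mul_one] at h0'
    exact hD.ne' h0'
  · intro V hmin
    have hlt := hSM V (show (-1 : ℝ) < 0 by norm_num)
    have h0 : (fun s => V s + (0:ℝ) * (if s = s₀ then (1:ℝ) else 0)) = V := by
      funext s; ring
    simp only [h0] at hlt
    have hle := isMinOn_iff.mp hmin
      (fun s => V s + (-1:ℝ) * (if s = s₀ then (1:ℝ) else 0)) (Set.mem_univ _)
    linarith
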